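/- arXiv:2309.14577 — 5 statements merged into one kernel-verified Lean document; each statement's English description precedes it below -/
import Mathlib

section
/- Let $\Phi = \{\varphi_1, \ldots, \varphi_N\}$ be an iterated function system of contraction maps on $\mathbb{R}^d$ with attractor $K$, and let $C$ be a nonempty compact set with $\bigcup_{i=1}^N \varphi_i(C) \subseteq C$ (so that $K \subseteq C$). For each $k \ge 1$, let $M_k$ be the supremum of the diameters of the connected components of $\bigcup_{\sigma \in \{1,\ldots,N\}^k} \varphi_\sigma(C)$, where $\varphi_\sigma = \varphi_{\sigma_1} \circ \cdots \circ \varphi_{\sigma_k}$. If $M_k \to 0$ as $k \to \infty$, then $K$ is totally disconnected. -/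
open Set Filter
open scoped ENNReal Topology

/-- Composition `φ_σ = φ_{σ 0} ∘ ⋯ ∘ φ_{σ (k-1)}` along a multi-index `σ`. -/
def compIFS {N : ℕ} {α : Type*} (φ : Fin N → α → α) : {k : ℕ} → (Fin k → Fin N) → α → α
  | 0, _ => id
  | _ + 1, σ => φ (σ 0) ∘ compIFS φ (fun i => σ i.succ)

/-- If the diameters of the connected components of the iterates
`⋃_{σ ∈ {1,…,N}^k} φ_σ(C)` tend to `0`, then the attractor `K` is totally disconnected. -/
theorem attractor_totallyDisconnected_of_component_diam_tendsto_zero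
    (d N : ℕ) (hN : 0 < N)
    (φ : Fin N → EuclideanSpace ℝ (Fin d) → EuclideanSpace ℝ (Fin d))
    (r : Fin N → NNReal) (hr : ∀ i, r i < 1) (hφ : ∀ i, LipschitzWith (r i) (φ i))
    (K : Set (EuclideanSpace ℝ (Fin d))) (hKne : K.Nonempty) (hKcpt : IsCompact K)
    (hKattr : K = ⋃ i, φ i '' K)
    (C : Set (EuclideanSpace ℝ (Fin d))) (hCne : C.Nonempty) (hCcpt : IsCompact C)
    (hCsub : (⋃ i, φ i '' C) ⊆ C)
    (hdiam : Tendsto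
      (fun k : ℕ => ⨆ x ∈ (⋃ σ : Fin k → Fin N, compIFS φ σ '' C),
        EMetric.diam (connectedComponentIn (⋃ σ : Fin k → Fin N, compIFS φ σ '' C) x))
      atTop (𝓝 0)) :
    IsTotallyDisconnected K := by
  classical
  set ρ : NNReal := Finset.univ.sup r with hρdef
  have hρlt : ρ < 1 := by
    refine (Finset.sup_lt_iff (by norm_num)).2 ?_
    intro i _; exact hr i
  have hri : ∀ i, r i ≤ ρ := fun i => Finset.le_sup (Finset.mem_univ i)
  -- Lipschitz estimate for compositions
  have hlip : ∀ k (σ : Fin k → Fin N), LipschitzWith (ρ ^ k) (compIFS φ σ) := by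
    intro k
    induction k with
    | zero => intro σ; simpa [compIFS] using LipschitzWith.id
    | succ k ih =>
      intro σ
      have h1 := (hφ (σ 0)).comp (ih fun i => σ i.succ)
      have h2 : r (σ 0) * ρ ^ k ≤ ρ ^ (k + 1) := by
        rw [pow_succ']
        exact mul_le_mul_left (hri _) _
      exact h1.weaken h2
  -- images of C under compositions stay in C
  have hcompC : ∀ k (σ : Fin k → Fin N), compIFS φ σ '' C ⊆ C := by
    intro k
    induction k with
    | zero => intro σ; simp [compIFS]
    | succ k ih =>
      intro σ
      rw [show compIFS φ σ = φ (σ 0) ∘ compIFS φ (fun i => σ i.succ) from rfl,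
        image_comp]
      exact (image_mono (ih _)).trans
        ((subset_iUnion (fun i => φ i '' C) (σ 0)).trans hCsub)
  -- every point of K is a k-fold image of a point of K
  have hKk : ∀ k, ∀ x ∈ K, ∃ σ : Fin k → Fin N, ∃ y ∈ K, compIFS φ σ y = x := by
    intro k
    induction k with
    | zero => intro x hx; exact ⟨Fin.elim0, x, hx, rfl⟩
    | succ k ih =>
      intro x hx
      rw [hKattr] at hx
      obtain ⟨i, z, hz, rfl⟩ := by simpa using hx
      obtain ⟨σ, y, hy, hzy⟩ := ih z hz
      refine ⟨Fin.cons i σ, y, hy, ?_⟩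
      have : compIFS φ (Fin.cons i σ) y = φ i (compIFS φ σ y) := by
        simp [compIFS, Fin.cons_zero, Fin.cons_succ]
      rw [this, hzy]
  -- K ⊆ C
  obtain ⟨c, hc⟩ := hCne
  have hKC : K ⊆ C := by
    intro x hx
    have hD : EMetric.diam (K ∪ C) ≠ ⊤ :=
      (hKcpt.union hCcpt).isBounded.ediam_ne_top
    rw [← hCcpt.isClosed.closure_eq]
    rw [EMetric.mem_closure_iff]
    intro ε hε
    -- choose k with ρ^k * diam < ε
    have htend : Tendsto (fun k : ℕ => (ρ : ℝ≥0∞) ^ k * EMetric.diam (K ∪ C))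
        atTop (𝓝 0) := by
      have h0 : Tendsto (fun k : ℕ => (ρ : ℝ≥0∞) ^ k) atTop (𝓝 0) :=
        ENNReal.tendsto_pow_atTop_nhds_zero_of_lt_one
          (by exact_mod_cast hρlt)
      simpa using ENNReal.Tendsto.mul_const h0 (Or.inr hD)
    obtain ⟨k, hk⟩ := (htend.eventually (gt_mem_nhds hε)).exists
    obtain ⟨σ, y, hy, hyx⟩ := hKk k x hx
    refine ⟨compIFS φ σ c, hcompC k σ (mem_image_of_mem _ hc), ?_⟩
    calc edist x (compIFS φ σ c) = edist (compIFS φ σ y) (compIFS φ σ c) := by rw [hyx]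
      _ ≤ (ρ : ℝ≥0∞) ^ k * edist y c := by
          simpa using (hlip k σ).edist_le_mul y c
      _ ≤ (ρ : ℝ≥0∞) ^ k * EMetric.diam (K ∪ C) := by
          exact mul_le_mul_right (EMetric.edist_le_diam_of_mem
            (mem_union_left _ hy) (mem_union_right _ hc)) _
      _ < ε := hk
  -- K is contained in every iterate set
  have hKS : ∀ k, K ⊆ ⋃ σ : Fin k → Fin N, compIFS φ σ '' C := by
    intro k x hx
    obtain ⟨σ, y, hy, hyx⟩ := hKk k x hx
    exact mem_iUnion.2 ⟨σ, ⟨y, hKC hy, hyx⟩⟩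
  -- main argument
  intro t htK hconn x hx y hy
  have key : ∀ k : ℕ, edist x y ≤
      ⨆ z ∈ (⋃ σ : Fin k → Fin N, compIFS φ σ '' C),
        EMetric.diam (connectedComponentIn (⋃ σ : Fin k → Fin N, compIFS φ σ '' C) z) := by
    intro k
    set S := ⋃ σ : Fin k → Fin N, compIFS φ σ '' C with hS
    have htS : t ⊆ S := htK.trans (hKS k)
    have hxS : x ∈ S := htS hx
    have hsub : t ⊆ connectedComponentIn S x :=
      hconn.subset_connectedComponentIn hx htS
    calc edist x y ≤ EMetric.diam (connectedComponentIn S x) :=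
          EMetric.edist_le_diam_of_mem (hsub hx) (hsub hy)
      _ ≤ _ := le_biSup (fun z => EMetric.diam (connectedComponentIn S z)) hxS
  have h0 : edist x y ≤ 0 := ge_of_tendsto' hdiam key
  have : edist x y = 0 := le_antisymm h0 zero_le
  exact edist_eq_zero.1 this
end

section
/- Let $\Phi = \{\varphi_1, \ldots, \varphi_N\}$ be a self-affine IFS on $\mathbb{R}^d$ with attractor $K$, let $C$ be the convex hull of $K$, and fix $1 \le k < d$. Then the following are equivalent: (1) for every $(d-k)$-dimensional affine subspace $W$ of $\mathbb{R}^d$ with $W \cap C \ne \varnothing$, there exists some $i \in \{1, \ldots, N\}$ with $W \cap \varphi_i(C) \ne \varnothing$; (2) for every $k$-dimensional linear subspace $V$ of $\mathbb{R}^d$, the orthogonal projections satisfy $\pi_V(K) = \pi_V(C)$. -/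
open Set Module

/-- Orthogonal projection onto a subspace, viewed as a map of the ambient space. -/
noncomputable def orthProj {d : ℕ} (W : Submodule ℝ (EuclideanSpace ℝ (Fin d)))
    (x : EuclideanSpace ℝ (Fin d)) : EuclideanSpace ℝ (Fin d) :=
  (W.orthogonalProjectionOnto x : EuclideanSpace ℝ (Fin d))

lemma orthProj_lipschitz {d : ℕ} (V : Submodule ℝ (EuclideanSpace ℝ (Fin d)))
    (a b : EuclideanSpace ℝ (Fin d)) : dist (orthProj V a) (orthProj V b) ≤ dist a b := by
  rw [dist_eq_norm, dist_eq_norm]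
  have h : orthProj V a - orthProj V b
      = ((Submodule.orthogonalProjectionOnto V (a - b) : V) : EuclideanSpace ℝ (Fin d)) := by
    simp [orthProj, map_sub]
  rw [h]
  calc ‖((Submodule.orthogonalProjectionOnto V (a - b) : V) : EuclideanSpace ℝ (Fin d))‖
      = ‖Submodule.orthogonalProjectionOnto V (a - b)‖ := rfl
    _ ≤ ‖Submodule.orthogonalProjectionOnto V‖ * ‖a - b‖ := (Submodule.orthogonalProjectionOnto V).le_opNorm _
    _ ≤ 1 * ‖a - b‖ :=
        mul_le_mul_of_nonneg_right (Submodule.orthogonalProjectionOnto_norm_le V) (norm_nonneg _)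
    _ = ‖a - b‖ := one_mul _

lemma orthProj_eq_of_sub_mem {d : ℕ} (V : Submodule ℝ (EuclideanSpace ℝ (Fin d)))
    {a b : EuclideanSpace ℝ (Fin d)} (h : a - b ∈ Vᗮ) : orthProj V a = orthProj V b := by
  have h0 : Submodule.orthogonalProjectionOnto V (a - b) = 0 :=
    Submodule.orthogonalProjectionOnto_apply_of_mem_orthogonal h
  have h1 : Submodule.orthogonalProjectionOnto V a = Submodule.orthogonalProjectionOnto V b := by
    have h2 := map_sub (Submodule.orthogonalProjectionOnto V) a b
    rw [h0] at h2
    exact sub_eq_zero.mp h2.symm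
  simp only [orthProj, h1]

/-- Classification theorem: the attractor `K` of a self-affine IFS projects a very thick
shadow on every `k`-dimensional subspace iff every `(d-k)`-dimensional affine subspace
meeting `C = conv K` also meets some first-level image `φ_i(C)`. -/
theorem selfAffine_veryThickShadows_iff_affineSubspaces_meet_firstLevel
    (d k N : ℕ) (hk : 1 ≤ k) (hkd : k < d) (hN : 0 < N)
    (T : Fin N → (EuclideanSpace ℝ (Fin d) →L[ℝ] EuclideanSpace ℝ (Fin d)))
    (t : Fin N → EuclideanSpace ℝ (Fin d))
    (hT : ∀ i, ‖T i‖ < 1) (hTinv : ∀ i, Function.Bijective (T i))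
    (K : Set (EuclideanSpace ℝ (Fin d))) (hKne : K.Nonempty) (hKcpt : IsCompact K)
    (hKattr : K = ⋃ i, (fun x => T i x + t i) '' K)
    (C : Set (EuclideanSpace ℝ (Fin d))) (hC : C = convexHull ℝ K) :
    (∀ (V : Submodule ℝ (EuclideanSpace ℝ (Fin d))), finrank ℝ V = d - k →
      ∀ x : EuclideanSpace ℝ (Fin d),
        (((fun v => v + x) '' (V : Set (EuclideanSpace ℝ (Fin d)))) ∩ C).Nonempty →
        ∃ i, (((fun v => v + x) '' (V : Set (EuclideanSpace ℝ (Fin d)))) ∩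
          ((fun y => T i y + t i) '' C)).Nonempty) ↔
    (∀ (V : Submodule ℝ (EuclideanSpace ℝ (Fin d))), finrank ℝ V = k →
      orthProj V '' K = orthProj V '' C) := by
  -- membership in translated subspaces
  have mem_aff : ∀ (V : Submodule ℝ (EuclideanSpace ℝ (Fin d)))
      (x z : EuclideanSpace ℝ (Fin d)),
      z ∈ (fun v => v + x) '' (V : Set (EuclideanSpace ℝ (Fin d))) ↔ z - x ∈ V := by
    intro V x z
    constructor
    · rintro ⟨v, hv, rfl⟩; simpa using hv
    · intro h; exact ⟨z - x, h, sub_add_cancel z x⟩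
  -- basic facts about K and C
  have hKC : K ⊆ C := hC ▸ subset_convexHull ℝ K
  have hφK : ∀ i, (fun x => T i x + t i) '' K ⊆ K := by
    intro i
    conv_rhs => rw [hKattr]
    exact subset_iUnion (fun j => (fun x => T j x + t j) '' K) i
  have himg : ∀ i, (fun x => T i x + t i) '' C
      = convexHull ℝ ((fun x => T i x + t i) '' K) := by
    intro i
    have hf : (fun x : EuclideanSpace ℝ (Fin d) => T i x + t i)
        = ⇑(((T i : EuclideanSpace ℝ (Fin d) →ₗ[ℝ]
            EuclideanSpace ℝ (Fin d))).toAffineMap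
          + AffineMap.const ℝ (EuclideanSpace ℝ (Fin d)) (t i)) := by
      funext x; simp
    rw [hC, hf, AffineMap.image_convexHull]
  have hφC : ∀ i, (fun x => T i x + t i) '' C ⊆ C := by
    intro i
    rw [himg i, hC]
    exact convexHull_mono (hφK i)
  have hrankE : finrank ℝ (EuclideanSpace ℝ (Fin d)) = d := finrank_euclideanSpace_fin
  have horth : ∀ (V : Submodule ℝ (EuclideanSpace ℝ (Fin d))),
      finrank ℝ V + finrank ℝ Vᗮ = d := by
    intro V; rw [Submodule.finrank_add_finrank_orthogonal, hrankE]
  constructor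
  · -- (1) → (2)
    intro h V hV
    haveI : Nonempty (Fin N) := ⟨⟨0, hN⟩⟩
    set r : ℝ := Finset.univ.sup' Finset.univ_nonempty (fun i => ‖T i‖) with hr
    have hle_r : ∀ i, ‖T i‖ ≤ r :=
      fun i => Finset.le_sup' (fun j => ‖T j‖) (Finset.mem_univ i)
    have hr1 : r < 1 := by
      rw [hr, Finset.sup'_lt_iff]; intro i _; exact hT i
    have hr0 : 0 ≤ r := le_trans (norm_nonneg (T ⟨0, hN⟩)) (hle_r _)
    set D : ℝ := Metric.diam C with hD
    have hCbdd : Bornology.IsBounded C := by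
      rw [hC, isBounded_convexHull]; exact hKcpt.isBounded
    -- key approximation claim
    have key : ∀ (n : ℕ) (V' : Submodule ℝ (EuclideanSpace ℝ (Fin d))),
        finrank ℝ V' = d - k → ∀ x : EuclideanSpace ℝ (Fin d),
        (((fun v => v + x) '' (V' : Set (EuclideanSpace ℝ (Fin d)))) ∩ C).Nonempty →
        ∃ w ∈ ((fun v => v + x) '' (V' : Set (EuclideanSpace ℝ (Fin d)))) ∩ C,
          ∃ y ∈ K, dist w y ≤ r ^ n * D := by
      intro n
      induction n with
      | zero =>
        intro V' hV' x ⟨w, hw⟩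
        obtain ⟨y, hy⟩ := hKne
        exact ⟨w, hw, y, hy, by
          simpa using Metric.dist_le_diam_of_mem hCbdd hw.2 (hKC hy)⟩
      | succ n ih =>
        intro V' hV' x hne
        obtain ⟨i, z, hzW, hzC⟩ := h V' hV' x hne
        obtain ⟨u, huC, huz⟩ := hzC
        -- pull back along φ i
        set e : EuclideanSpace ℝ (Fin d) ≃ₗ[ℝ] EuclideanSpace ℝ (Fin d) :=
          LinearEquiv.ofBijective
            (T i : EuclideanSpace ℝ (Fin d) →ₗ[ℝ] EuclideanSpace ℝ (Fin d)) (hTinv i) with he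
        set V'' : Submodule ℝ (EuclideanSpace ℝ (Fin d)) :=
          V'.comap (T i : EuclideanSpace ℝ (Fin d) →ₗ[ℝ] EuclideanSpace ℝ (Fin d)) with hV''def
        have hV''rank : finrank ℝ V'' = d - k := by
          have hmap : V'' = V'.map (e.symm : EuclideanSpace ℝ (Fin d) →ₗ[ℝ]
              EuclideanSpace ℝ (Fin d)) := by
            rw [hV''def, Submodule.map_equiv_eq_comap_symm, LinearEquiv.symm_symm]
            rfl
          rw [hmap, LinearEquiv.finrank_map_eq, hV']
        have hu : u ∈ ((fun v => v + u) '' (V'' : Set (EuclideanSpace ℝ (Fin d)))) ∩ C := by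
          refine ⟨(mem_aff _ _ _).mpr ?_, huC⟩
          simp
        obtain ⟨w', hw', y', hy', hdist⟩ := ih V'' hV''rank u ⟨u, hu⟩
        refine ⟨T i w' + t i, ⟨?_, hφC i ⟨w', hw'.2, rfl⟩⟩,
          T i y' + t i, hφK i ⟨y', hy', rfl⟩, ?_⟩
        · rw [mem_aff]
          have h1 : w' - u ∈ V'' := (mem_aff _ _ _).mp hw'.1
          have h2 : T i (w' - u) ∈ V' := h1
          have h3 : z - x ∈ V' := (mem_aff _ _ _).mp hzW
          have heq : T i w' + t i - x = T i (w' - u) + (z - x) := by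
            rw [map_sub, ← huz]; beta_reduce; abel
          rw [heq]
          exact V'.add_mem h2 h3
        · rw [dist_eq_norm]
          have heq : T i w' + t i - (T i y' + t i) = T i (w' - y') := by
            rw [map_sub]; abel
          rw [heq]
          calc ‖T i (w' - y')‖ ≤ ‖T i‖ * ‖w' - y'‖ := (T i).le_opNorm _
            _ ≤ r * (r ^ n * D) := by
                apply mul_le_mul (hle_r i) _ (norm_nonneg _) hr0
                rw [← dist_eq_norm]; exact hdist
            _ = r ^ (n + 1) * D := by ring
    -- conclude the projection equality
    apply Set.Subset.antisymm (Set.image_mono hKC)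
    rintro p ⟨c, hcC, rfl⟩
    have hVp : finrank ℝ (Vᗮ) = d - k := by have := horth V; omega
    have hclosed : IsClosed (orthProj V '' K) := by
      have hcont : Continuous (orthProj V) :=
        (continuous_subtype_val.comp (Submodule.orthogonalProjectionOnto V).continuous)
      exact (hKcpt.image hcont).isClosed
    rw [← hclosed.closure_eq, Metric.mem_closure_iff]
    intro ε hε
    have htend : Filter.Tendsto (fun n => r ^ n * D) Filter.atTop (nhds 0) := by
      simpa using (tendsto_pow_atTop_nhds_zero_of_lt_one hr0 hr1).mul_const D
    have hn' : ∃ n : ℕ, r ^ n * D < ε := by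
      rcases Metric.tendsto_atTop.mp htend ε hε with ⟨n, hn2⟩
      refine ⟨n, ?_⟩
      have hd := hn2 n le_rfl
      rw [Real.dist_eq, sub_zero] at hd
      calc r ^ n * D ≤ |r ^ n * D| := le_abs_self _
        _ < ε := hd
    obtain ⟨n, hn⟩ := hn'
    have hcne : (((fun v => v + c) '' ((Vᗮ : Submodule ℝ (EuclideanSpace ℝ (Fin d))) :
        Set (EuclideanSpace ℝ (Fin d)))) ∩ C).Nonempty :=
      ⟨c, (mem_aff _ _ _).mpr (by simp), hcC⟩
    obtain ⟨w, hw, y, hy, hdist⟩ := key n Vᗮ hVp c hcne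
    refine ⟨orthProj V y, ⟨y, hy, rfl⟩, ?_⟩
    have hwc : orthProj V w = orthProj V c :=
      orthProj_eq_of_sub_mem V ((mem_aff _ _ _).mp hw.1)
    calc dist (orthProj V c) (orthProj V y) = dist (orthProj V w) (orthProj V y) := by
          rw [hwc]
      _ ≤ dist w y := orthProj_lipschitz V w y
      _ ≤ r ^ n * D := hdist
      _ < ε := hn
  · -- (2) → (1)
    intro h V hV x hne
    obtain ⟨c, hcW, hcC⟩ := hne
    have hVp : finrank ℝ (Vᗮ) = k := by have := horth V; omega
    have hproj := h Vᗮ hVp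
    have hc : orthProj Vᗮ c ∈ orthProj Vᗮ '' C := ⟨c, hcC, rfl⟩
    rw [← hproj] at hc
    obtain ⟨y, hyK, hy⟩ := hc
    have hyc : y - c ∈ V := by
      have h0 : Submodule.orthogonalProjectionOnto Vᗮ (y - c) = 0 := by
        have hcoe : Submodule.orthogonalProjectionOnto Vᗮ y = Submodule.orthogonalProjectionOnto Vᗮ c := Subtype.ext hy
        rw [map_sub, hcoe, sub_self]
      have h1 := Submodule.orthogonalProjectionOnto_eq_zero_iff.mp h0
      rwa [Submodule.orthogonal_orthogonal] at h1
    have hyW : y ∈ (fun v => v + x) '' (V : Set (EuclideanSpace ℝ (Fin d))) := by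
      rw [mem_aff]
      have hcx : c - x ∈ V := (mem_aff _ _ _).mp hcW
      have heq : y - x = (y - c) + (c - x) := by abel
      rw [heq]
      exact V.add_mem hyc hcx
    have hyU : y ∈ ⋃ i, (fun x => T i x + t i) '' K := hKattr ▸ hyK
    obtain ⟨i, hi⟩ := Set.mem_iUnion.mp hyU
    obtain ⟨z, hzK, hz⟩ := hi
    exact ⟨i, y, hyW, ⟨z, hKC hzK, hz⟩⟩
end

section
/- Let $\Phi = \{\varphi_1, \ldots, \varphi_N\}$ be a self-affine IFS on $\mathbb{R}^d$ with attractor $K$ and convex hull $C = \operatorname{conv}(K)$, and let $R_1, \ldots, R_r$ be the connected components of $\bigcup_{i=1}^N \varphi_i(C)$. Then the following are equivalent: (1) for every one-dimensional linear subspace $W$ of $\mathbb{R}^d$, $\pi_W(K) = \pi_W(C)$; (2) for every nonempty proper subset $I \subsetneq \{1, \ldots, r\}$, $\operatorname{conv}\big(\bigcup_{i \in I} R_i\big) \cap \operatorname{conv}\big(\bigcup_{i \in I^c} R_i\big) \ne \varnothing$. -/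
open Set Module

open RealInnerProductSpace

private lemma sum_pad {M α : Type*} [AddCommMonoid M] (t : Finset α) (n : ℕ) (h : t.card ≤ n)
    (F : α → M) :
    (∑ i : Fin n, (if h' : (i : ℕ) < t.card then F ((t.equivFin.symm ⟨(i : ℕ), h'⟩ : t) : α) else 0))
      = ∑ y ∈ t, F y := by
  classical
  set G : ℕ → M := fun k => if h' : k < t.card then F ((t.equivFin.symm ⟨k, h'⟩ : t) : α) else 0
    with hG
  calc (∑ i : Fin n, G i) = ∑ k ∈ Finset.range n, G k := Fin.sum_univ_eq_sum_range G n
    _ = ∑ k ∈ Finset.range t.card, G k := by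
          refine (Finset.sum_subset (Finset.range_subset_range.mpr h) ?_).symm
          intro k _ hk'
          simp only [Finset.mem_range] at hk'
          simp [hG, hk']
    _ = ∑ i : Fin t.card, G i := (Fin.sum_univ_eq_sum_range G t.card).symm
    _ = ∑ i : Fin t.card, F ((t.equivFin.symm i : t) : α) := by
          refine Finset.sum_congr rfl fun i _ => ?_
          simp [hG, i.isLt]
    _ = ∑ a : t, F (a : α) := by exact Equiv.sum_comp t.equivFin.symm fun a : t => F (a : α)
    _ = ∑ y ∈ t, F y := Finset.sum_coe_sort t F

/-- Convex hull of a compact set in Euclidean space is compact (Carathéodory). -/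
private lemma aux_isCompact_convexHull {d : ℕ} {s : Set (EuclideanSpace ℝ (Fin d))}
    (hs : IsCompact s) : IsCompact (convexHull ℝ s) := by
  classical
  set n := d + 1 with hn
  set f : (Fin n → ℝ) × (Fin n → EuclideanSpace ℝ (Fin d)) → EuclideanSpace ℝ (Fin d) :=
    fun p => ∑ i, p.1 i • p.2 i with hf
  have hfc : Continuous f := by
    apply continuous_finset_sum
    intro i _
    exact ((continuous_apply i).comp continuous_fst).smul ((continuous_apply i).comp continuous_snd)
  have hD : IsCompact ((stdSimplex ℝ (Fin n)) ×ˢ (Set.univ.pi fun _ : Fin n => s)) :=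
    (isCompact_stdSimplex _ _).prod (isCompact_univ_pi fun _ => hs)
  have himg : convexHull ℝ s = f '' ((stdSimplex ℝ (Fin n)) ×ˢ (Set.univ.pi fun _ : Fin n => s)) := by
    apply Subset.antisymm
    · intro x hx
      rw [convexHull_eq_union] at hx
      simp only [mem_iUnion] at hx
      obtain ⟨t, hts, hai, hxt⟩ := hx
      have hcard : t.card ≤ n := by
        have h1 := hai.card_le_finrank_succ
        have h2 : finrank ℝ (vectorSpan ℝ (Set.range (Subtype.val : t → EuclideanSpace ℝ (Fin d))))
            ≤ finrank ℝ (EuclideanSpace ℝ (Fin d)) := Submodule.finrank_le _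
        have h3 : finrank ℝ (EuclideanSpace ℝ (Fin d)) = d := finrank_euclideanSpace_fin
        rw [Fintype.card_coe] at h1
        omega
      have htne : t.Nonempty := by
        rcases t.eq_empty_or_nonempty with h | h
        · exfalso; rw [h] at hxt; simp at hxt
        · exact h
      rw [Finset.convexHull_eq] at hxt
      obtain ⟨w, hw0, hw1, hwx⟩ := hxt
      rw [Finset.centerMass_eq_of_sum_1 _ _ hw1] at hwx
      simp only [id] at hwx
      obtain ⟨y₀, hy₀⟩ := htne
      refine ⟨(fun i => if h' : (i : ℕ) < t.card then w ((t.equivFin.symm ⟨(i : ℕ), h'⟩ : t) : EuclideanSpace ℝ (Fin d)) else 0,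
              fun i => if h' : (i : ℕ) < t.card then ((t.equivFin.symm ⟨(i : ℕ), h'⟩ : t) : EuclideanSpace ℝ (Fin d)) else y₀),
              Set.mem_prod.mpr ⟨⟨?_, ?_⟩, ?_⟩, ?_⟩
      · intro i
        dsimp only
        split
        · exact hw0 _ (Finset.coe_mem _)
        · exact le_refl 0
      · exact (sum_pad t n hcard w).trans hw1
      · intro i _
        dsimp only
        split
        · exact hts (Finset.coe_mem _)
        · exact hts hy₀
      · rw [hf]
        dsimp only
        rw [← hwx, ← sum_pad t n hcard (fun y => w y • y)]
        refine Finset.sum_congr rfl fun i _ => ?_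
        by_cases h' : (i : ℕ) < t.card
        · simp [h']
        · simp [h']
    · rintro _ ⟨⟨w, g⟩, hmem, rfl⟩
      obtain ⟨hw, hg⟩ := Set.mem_prod.mp hmem
      have hw' : w ∈ stdSimplex ℝ (Fin n) := hw
      exact (convex_convexHull ℝ s).sum_mem (fun i _ => hw'.1 i) hw'.2
        (fun i _ => subset_convexHull ℝ s (hg i (mem_univ i)))
  rw [himg]
  exact hD.image hfc

set_option maxHeartbeats 2000000 in
/-- Classification theorem via connected components: the attractor `K` of a self-affine
IFS projects a very thick shadow on every 1-dimensional subspace iff for every nonempty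
proper subset `I` of the index set of the connected components `R₁, …, R_r` of
`⋃ᵢ φᵢ(C)`, the convex hulls of `⋃_{i ∈ I} Rᵢ` and `⋃_{i ∈ Iᶜ} Rᵢ` intersect. -/
theorem selfAffine_veryThickShadows_iff_components_convexHulls_meet
    (d N : ℕ) (hd : 1 ≤ d) (hN : 0 < N)
    (T : Fin N → (EuclideanSpace ℝ (Fin d) →L[ℝ] EuclideanSpace ℝ (Fin d)))
    (t : Fin N → EuclideanSpace ℝ (Fin d))
    (hT : ∀ i, ‖T i‖ < 1) (hTinv : ∀ i, Function.Bijective (T i))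
    (K : Set (EuclideanSpace ℝ (Fin d))) (hKne : K.Nonempty) (hKcpt : IsCompact K)
    (hKattr : K = ⋃ i, (fun x => T i x + t i) '' K)
    (C : Set (EuclideanSpace ℝ (Fin d))) (hC : C = convexHull ℝ K)
    (r : ℕ) (R : Fin r → Set (EuclideanSpace ℝ (Fin d)))
    -- `R 1, …, R r` are exactly the connected components of the first-level union:
    (hRcover : (⋃ i, (fun x => T i x + t i) '' C) = ⋃ j, R j)
    (hRne : ∀ j, (R j).Nonempty)
    (hRcomp : ∀ j, ∀ x ∈ R j,
      R j = connectedComponentIn (⋃ i, (fun x => T i x + t i) '' C) x)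
    (hRdisj : Pairwise (Function.onFun Disjoint R)) :
    (∀ (W : Submodule ℝ (EuclideanSpace ℝ (Fin d))), finrank ℝ W = 1 →
      orthProj W '' K = orthProj W '' C) ↔
    (∀ I : Finset (Fin r), I.Nonempty → I ≠ Finset.univ →
      ((convexHull ℝ (⋃ i ∈ I, R i)) ∩ (convexHull ℝ (⋃ i ∈ Iᶜ, R i))).Nonempty) := by
  classical
  set S : Set (EuclideanSpace ℝ (Fin d)) := ⋃ i, (fun x => T i x + t i) '' C with hSdef
  -- basic facts
  have hKC : K ⊆ C := hC ▸ subset_convexHull ℝ K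
  have hCcv : Convex ℝ C := hC ▸ convex_convexHull ℝ K
  have hCcpt : IsCompact C := hC ▸ aux_isCompact_convexHull hKcpt
  have hCne : C.Nonempty := hKne.mono hKC
  have hφK : ∀ i, (fun x => T i x + t i) '' K ⊆ K := by
    intro i
    conv_rhs => rw [hKattr]
    exact subset_iUnion (fun i => (fun x => T i x + t i) '' K) i
  have haff : ∀ i : Fin N, ∃ g : (EuclideanSpace ℝ (Fin d)) →ᵃ[ℝ] (EuclideanSpace ℝ (Fin d)), ⇑g = fun x => T i x + t i := by
    intro i
    refine ⟨AffineMap.mk (fun x => T i x + t i) (T i).toLinearMap ?_, rfl⟩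
    intro p v
    simp [map_add, add_assoc, add_comm, add_left_comm]
  have hφC : ∀ i, (fun x => T i x + t i) '' C ⊆ C := by
    intro i
    obtain ⟨g, hg⟩ := haff i
    rw [← hg, hC, AffineMap.image_convexHull]
    refine convexHull_mono ?_
    rw [hg]
    exact hφK i
  have hSC : S ⊆ C := by
    rw [hSdef]; exact iUnion_subset hφC
  have hKS : K ⊆ S := by
    rw [hSdef]
    conv_lhs => rw [hKattr]
    exact iUnion_mono fun i => Set.image_mono hKC
  have hφcont : ∀ i : Fin N, Continuous fun x : (EuclideanSpace ℝ (Fin d)) => T i x + t i := fun i =>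
    (T i).continuous.add continuous_const
  have hScpt : IsCompact S := by
    rw [hSdef]
    exact isCompact_iUnion fun i => hCcpt.image (hφcont i)
  have hRS : ∀ j, R j ⊆ S := by
    intro j
    rw [hRcover]
    exact subset_iUnion R j
  have hRpc : ∀ j, IsPreconnected (R j) := by
    intro j
    obtain ⟨x, hx⟩ := hRne j
    rw [hRcomp j x hx]
    exact isPreconnected_connectedComponentIn
  have hRclosed : ∀ j, IsClosed (R j) := by
    intro j
    obtain ⟨x, hx⟩ := hRne j
    have hsub : closure (R j) ⊆ connectedComponentIn S x := by
      refine (hRpc j).closure.subset_connectedComponentIn (subset_closure hx) ?_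
      exact closure_minimal (hRS j) hScpt.isClosed
    rw [← hRcomp j x hx] at hsub
    exact isClosed_of_closure_subset hsub
  have hRcpt : ∀ j, IsCompact (R j) := fun j =>
    hScpt.of_isClosed_subset (hRclosed j) (hRS j)
  -- image of C under a functional is the convex hull of the image of K
  have hfC : ∀ f : (EuclideanSpace ℝ (Fin d)) →L[ℝ] ℝ, f '' C = convexHull ℝ (f '' K) := by
    intro f
    have h1 := (f : (EuclideanSpace ℝ (Fin d)) →ₗ[ℝ] ℝ).image_convexHull K
    rw [hC]
    simpa using h1
  -- (1) implies all functional images agree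
  have hfun_of : (∀ (W : Submodule ℝ (EuclideanSpace ℝ (Fin d))), finrank ℝ W = 1 →
      orthProj W '' K = orthProj W '' C) → ∀ f : (EuclideanSpace ℝ (Fin d)) →L[ℝ] ℝ, f '' K = f '' C := by
    intro h1 f
    set v := (InnerProductSpace.toDual ℝ (EuclideanSpace ℝ (Fin d))).symm f with hv
    have hfv : ∀ x, f x = ⟪v, x⟫ := fun x => (InnerProductSpace.toDual_symm_apply).symm
    by_cases hv0 : v = 0
    · have hzero : ⇑f = fun _ => (0 : ℝ) := by
        funext x; rw [hfv, hv0, inner_zero_left]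
      rw [hzero, hKne.image_const, hCne.image_const]
    · refine Subset.antisymm (Set.image_mono (f := f) hKC) ?_
      rintro _ ⟨x, hx, rfl⟩
      have hW : finrank ℝ (Submodule.span ℝ {v}) = 1 := finrank_span_singleton hv0
      have hproj := h1 _ hW
      have hx' : orthProj (Submodule.span ℝ {v}) x ∈ orthProj (Submodule.span ℝ {v}) '' K := by
        rw [hproj]; exact mem_image_of_mem _ hx
      obtain ⟨k, hk, hkx⟩ := hx'
      refine ⟨k, hk, ?_⟩
      have hvv : (‖v‖ : ℝ) ^ 2 ≠ 0 := pow_ne_zero 2 (norm_ne_zero_iff.mpr hv0)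
      rw [orthProj, orthProj, ← Submodule.starProjection_apply, ← Submodule.starProjection_apply, Submodule.starProjection_singleton, Submodule.starProjection_singleton] at hkx
      have h2 : ⟪v, k⟫ / (‖v‖ : ℝ) ^ 2 = ⟪v, x⟫ / (‖v‖ : ℝ) ^ 2 :=
        smul_left_injective ℝ hv0 hkx
      have h3 : ⟪v, k⟫ = ⟪v, x⟫ := by
        field_simp at h2
        exact h2
      rw [hfv, hfv, h3]
  constructor
  · -- (1) → (2)
    intro h1 I hIne hIuniv
    by_contra hcon
    rw [not_nonempty_iff_eq_empty, ← disjoint_iff_inter_eq_empty] at hcon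
    have hAcpt : IsCompact (convexHull ℝ (⋃ i ∈ I, R i)) := by
      apply aux_isCompact_convexHull
      rw [← Finset.set_biUnion_coe]
      exact I.finite_toSet.isCompact_biUnion fun i _ => hRcpt i
    have hBcpt : IsCompact (convexHull ℝ (⋃ i ∈ Iᶜ, R i)) := by
      apply aux_isCompact_convexHull
      rw [← Finset.set_biUnion_coe]
      exact (Iᶜ : Finset (Fin r)).finite_toSet.isCompact_biUnion fun i _ => hRcpt i
    obtain ⟨f, u, u', hfu, huu', hfu'⟩ := geometric_hahn_banach_compact_closed
      (convex_convexHull ℝ _) hAcpt (convex_convexHull ℝ _) hBcpt.isClosed hcon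
    have hfS : f '' S = f '' C := by
      refine Subset.antisymm (Set.image_mono (f := f) hSC) ?_
      rw [← hfun_of h1 f]
      exact Set.image_mono (f := f) hKS
    have hconv : Convex ℝ (f '' S) := by
      rw [hfS]
      exact hCcv.is_linear_image ⟨f.map_add, f.map_smul⟩
    obtain ⟨ia, hia⟩ := hIne
    obtain ⟨ib, hib⟩ : ∃ ib, ib ∈ Iᶜ := by
      by_contra hno
      push_neg at hno
      apply hIuniv
      apply Finset.eq_univ_iff_forall.mpr
      intro j
      by_contra hj
      exact hno j (Finset.mem_compl.mpr hj)
    obtain ⟨pa, hpa⟩ := hRne ia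
    obtain ⟨pb, hpb⟩ := hRne ib
    have hpaA : pa ∈ convexHull ℝ (⋃ i ∈ I, R i) :=
      subset_convexHull ℝ _ (mem_iUnion₂.mpr ⟨ia, hia, hpa⟩)
    have hpbB : pb ∈ convexHull ℝ (⋃ i ∈ Iᶜ, R i) :=
      subset_convexHull ℝ _ (mem_iUnion₂.mpr ⟨ib, hib, hpb⟩)
    have hfpa : f pa < u := hfu pa hpaA
    have hfpb : u' < f pb := hfu' pb hpbB
    set z : ℝ := (u + u') / 2 with hz
    have hz1 : f pa < z := by rw [hz]; linarith
    have hz2 : z < f pb := by rw [hz]; linarith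
    have hzS : z ∈ f '' S := by
      have h1' : f pa ∈ f '' S := mem_image_of_mem f (hRS ia hpa)
      have h2' : f pb ∈ f '' S := mem_image_of_mem f (hRS ib hpb)
      exact hconv.ordConnected.out h1' h2' ⟨le_of_lt hz1, le_of_lt hz2⟩
    obtain ⟨q, hqS, hfq⟩ := hzS
    rw [hRcover] at hqS
    obtain ⟨j, hqj⟩ := mem_iUnion.mp hqS
    by_cases hjI : j ∈ I
    · have : f q < u := hfu q (subset_convexHull ℝ _ (mem_iUnion₂.mpr ⟨j, hjI, hqj⟩))
      rw [hfq] at this; rw [hz] at this; linarith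
    · have : u' < f q := hfu' q (subset_convexHull ℝ _
        (mem_iUnion₂.mpr ⟨j, Finset.mem_compl.mpr hjI, hqj⟩))
      rw [hfq] at this; rw [hz] at this; linarith
  · -- (2) → (1)
    intro h2
    -- Step 1: images of S under functionals are order-connected
    have key1 : ∀ (f : (EuclideanSpace ℝ (Fin d)) →L[ℝ] ℝ) (a b z : ℝ), a ∈ f '' S → b ∈ f '' S →
        a ≤ z → z ≤ b → z ∈ f '' S := by
      intro f a b z ha hb haz hzb
      by_contra hz
      have haz' : a < z := lt_of_le_of_ne haz (by rintro rfl; exact hz ha)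
      have hzb' : z < b := lt_of_le_of_ne hzb (by rintro rfl; exact hz hb)
      have hside : ∀ j, (∀ x ∈ R j, f x < z) ∨ (∀ x ∈ R j, z < f x) := by
        intro j
        by_cases hj : ∀ x ∈ R j, f x < z
        · exact Or.inl hj
        · right
          push_neg at hj
          obtain ⟨p, hp, hzp⟩ := hj
          intro x hx
          by_contra hxz
          push_neg at hxz
          have hc : IsPreconnected (f '' R j) :=
            (hRpc j).image f f.continuous.continuousOn
          have hzin : z ∈ f '' R j :=
            hc.ordConnected.out (mem_image_of_mem f hx) (mem_image_of_mem f hp) ⟨hxz, hzp⟩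
          exact hz (Set.image_mono (f := f) (hRS j) hzin)
      set I : Finset (Fin r) := Finset.univ.filter (fun j => ∀ x ∈ R j, f x < z) with hI
      obtain ⟨pa, hpaS, hfa⟩ := ha
      obtain ⟨pb, hpbS, hfb⟩ := hb
      rw [hRcover] at hpaS hpbS
      obtain ⟨ja, hja⟩ := mem_iUnion.mp hpaS
      obtain ⟨jb, hjb⟩ := mem_iUnion.mp hpbS
      have hjaI : ja ∈ I := by
        rcases hside ja with h | h
        · exact Finset.mem_filter.mpr ⟨Finset.mem_univ _, h⟩
        · exact absurd (h pa hja) (by rw [hfa]; exact not_lt.mpr (le_of_lt haz'))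
      have hjbI : jb ∉ I := by
        intro hmem
        have := (Finset.mem_filter.mp hmem).2 pb hjb
        rw [hfb] at this
        exact absurd this (not_lt.mpr (le_of_lt hzb'))
      have hInuniv : I ≠ Finset.univ := by
        intro h
        exact hjbI (h ▸ Finset.mem_univ jb)
      obtain ⟨q, hqA, hqB⟩ := h2 I ⟨ja, hjaI⟩ hInuniv
      have hA : convexHull ℝ (⋃ i ∈ I, R i) ⊆ {x : (EuclideanSpace ℝ (Fin d)) | f x < z} := by
        apply convexHull_min
        · intro y hy
          obtain ⟨i, hiI, hyi⟩ := mem_iUnion₂.mp hy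
          exact (Finset.mem_filter.mp hiI).2 y hyi
        · exact convex_halfSpace_lt ⟨f.map_add, f.map_smul⟩ z
      have hB : convexHull ℝ (⋃ i ∈ Iᶜ, R i) ⊆ {x : (EuclideanSpace ℝ (Fin d)) | z < f x} := by
        apply convexHull_min
        · intro y hy
          obtain ⟨i, hiI, hyi⟩ := mem_iUnion₂.mp hy
          have hiI' : i ∉ I := Finset.mem_compl.mp hiI
          rcases hside i with h | h
          · exact absurd (Finset.mem_filter.mpr ⟨Finset.mem_univ _, h⟩) hiI'
          · exact h y hyi
        · exact convex_halfSpace_gt ⟨f.map_add, f.map_smul⟩ z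
      have h1' := hA hqA
      have h2' := hB hqB
      simp only [mem_setOf_eq] at h1' h2'
      linarith
    -- Step 2 : f '' S = f '' C
    have key2 : ∀ f : (EuclideanSpace ℝ (Fin d)) →L[ℝ] ℝ, f '' S = f '' C := by
      intro f
      refine Subset.antisymm (Set.image_mono (f := f) hSC) ?_
      intro z hz
      rw [hfC f] at hz
      have hJcpt : IsCompact (f '' K) := hKcpt.image f.continuous
      have hJne : (f '' K).Nonempty := hKne.image f
      have hIcc : convexHull ℝ (f '' K) ⊆ Icc (sInf (f '' K)) (sSup (f '' K)) := by
        apply convexHull_min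
        · intro y hy
          exact ⟨csInf_le hJcpt.bddBelow hy, le_csSup hJcpt.bddAbove hy⟩
        · exact convex_Icc _ _
      have hzi := hIcc hz
      have haS : sInf (f '' K) ∈ f '' S := Set.image_mono (f := f) hKS (hJcpt.sInf_mem hJne)
      have hbS : sSup (f '' K) ∈ f '' S := Set.image_mono (f := f) hKS (hJcpt.sSup_mem hJne)
      exact key1 f _ _ z haS hbS hzi.1 hzi.2
    -- iterates
    set U : ℕ → Set (EuclideanSpace ℝ (Fin d)) := fun n => Nat.rec C (fun _ Un => ⋃ i, (fun x => T i x + t i) '' Un) n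
      with hUdef
    have hU0 : U 0 = C := rfl
    have hUsucc : ∀ n, U (n + 1) = ⋃ i, (fun x => T i x + t i) '' U n := fun n => rfl
    have hKU : ∀ n, K ⊆ U n := by
      intro n
      induction n with
      | zero => exact hKC
      | succ n ih =>
        rw [hUsucc]
        conv_lhs => rw [hKattr]
        exact iUnion_mono fun i => Set.image_mono ih
    have himg : ∀ (n : ℕ) (f : (EuclideanSpace ℝ (Fin d)) →L[ℝ] ℝ), f ≠ 0 → f '' U n = f '' C := by
      intro n
      induction n with
      | zero => intro f _; rfl
      | succ n ih =>
        intro f hf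
        have step : ∀ A : Set (EuclideanSpace ℝ (Fin d)), f '' (⋃ i, (fun x => T i x + t i) '' A)
            = ⋃ i, (fun y => y + f (t i)) '' ((f.comp (T i)) '' A) := by
          intro A
          rw [image_iUnion]
          refine iUnion_congr fun i => ?_
          rw [image_image, image_image]
          refine image_congr fun x _ => ?_
          simp [map_add]
        have hco : ∀ i : Fin N, (f.comp (T i)) '' U n = (f.comp (T i)) '' C := by
          intro i
          apply ih
          intro h0
          apply hf
          ext x
          obtain ⟨y, hy⟩ := (hTinv i).2 x
          have h := congrArg (fun g : (EuclideanSpace ℝ (Fin d)) →L[ℝ] ℝ => g y) h0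
          simp only [ContinuousLinearMap.comp_apply, ContinuousLinearMap.zero_apply] at h
          rw [ContinuousLinearMap.zero_apply, ← hy]
          exact h
        rw [hUsucc, step]
        have hrw : (⋃ i, (fun y => y + f (t i)) '' ((f.comp (T i)) '' U n))
            = ⋃ i, (fun y => y + f (t i)) '' ((f.comp (T i)) '' C) := by
          exact iUnion_congr fun i => by rw [hco i]
        rw [hrw, ← step C, ← hSdef]
        exact key2 f
    -- contraction estimates
    haveI : Nonempty (Fin N) := ⟨⟨0, hN⟩⟩
    obtain ⟨D, hD0, hDb⟩ : ∃ D, 0 ≤ D ∧ ∀ x ∈ C, ∀ y ∈ C, dist x y ≤ D := by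
      obtain ⟨D, hD⟩ := Metric.isBounded_iff.mp hCcpt.isBounded
      exact ⟨max D 0, le_max_right _ _, fun x hx y hy => le_trans (hD hx hy) (le_max_left _ _)⟩
    set ρ : ℝ := Finset.univ.sup' Finset.univ_nonempty (fun i : Fin N => ‖T i‖) with hρ
    have hρi : ∀ i, ‖T i‖ ≤ ρ := fun i =>
      Finset.le_sup' (fun j : Fin N => ‖T j‖) (Finset.mem_univ i)
    have hρ0 : 0 ≤ ρ := le_trans (norm_nonneg _) (hρi ⟨0, hN⟩)
    have hρ1 : ρ < 1 := (Finset.sup'_lt_iff Finset.univ_nonempty).mpr fun i _ => hT i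
    have happrox : ∀ n, ∀ x ∈ U n, ∃ k ∈ K, dist x k ≤ ρ ^ n * D := by
      intro n
      induction n with
      | zero =>
        intro x hx
        obtain ⟨k, hk⟩ := hKne
        exact ⟨k, hk, by rw [pow_zero, one_mul]; exact hDb x hx k (hKC hk)⟩
      | succ n ih =>
        intro x hx
        rw [hUsucc] at hx
        obtain ⟨i, hxi⟩ := mem_iUnion.mp hx
        obtain ⟨y, hy, rfl⟩ := hxi
        obtain ⟨k, hk, hdist⟩ := ih y hy
        refine ⟨T i k + t i, ?_, ?_⟩
        · have : T i k + t i ∈ (fun x => T i x + t i) '' K := mem_image_of_mem _ hk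
          exact hφK i this
        · have h1 : dist (T i y + t i) (T i k + t i) = ‖T i (y - k)‖ := by
            rw [dist_add_right, dist_eq_norm, map_sub]
          have h2 : ‖T i (y - k)‖ ≤ ‖T i‖ * ‖y - k‖ := (T i).le_opNorm _
          have h3 : ‖y - k‖ = dist y k := (dist_eq_norm y k).symm
          have h4 : ‖T i‖ * ‖y - k‖ ≤ ρ * (ρ ^ n * D) := by
            rw [h3]
            apply mul_le_mul (hρi i) hdist dist_nonneg hρ0
          rw [h1]
          calc ‖T i (y - k)‖ ≤ ρ * (ρ ^ n * D) := le_trans h2 h4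
            _ = ρ ^ (n + 1) * D := by ring
    -- functional images of K equal those of C
    have hKfC : ∀ f : (EuclideanSpace ℝ (Fin d)) →L[ℝ] ℝ, f ≠ 0 → f '' K = f '' C := by
      intro f hf
      refine Subset.antisymm (Set.image_mono (f := f) hKC) ?_
      intro z hz
      have hcl : IsClosed (f '' K) := (hKcpt.image f.continuous).isClosed
      rw [← hcl.closure_eq]
      rw [Metric.mem_closure_iff]
      intro ε hε
      set Q : ℝ := ‖f‖ * D + 1 with hQ
      have hQ0 : 0 < Q := by positivity
      have hεQ : 0 < ε / Q := div_pos hε hQ0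
      obtain ⟨n, hn⟩ := ((tendsto_pow_atTop_nhds_zero_of_lt_one hρ0 hρ1).eventually
        (gt_mem_nhds hεQ)).exists
      have hz' : z ∈ f '' U n := by rw [himg n f hf]; exact hz
      obtain ⟨x, hx, rfl⟩ := hz'
      obtain ⟨k, hk, hdist⟩ := happrox n x hx
      refine ⟨f k, mem_image_of_mem f hk, ?_⟩
      have h1 : dist (f x) (f k) = ‖f (x - k)‖ := by
        rw [dist_eq_norm, ← map_sub]
      have h2 : ‖f (x - k)‖ ≤ ‖f‖ * ‖x - k‖ := f.le_opNorm _
      have h3 : ‖x - k‖ = dist x k := (dist_eq_norm x k).symm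
      have h4 : ‖f‖ * ‖x - k‖ ≤ ‖f‖ * (ρ ^ n * D) := by
        rw [h3]
        exact mul_le_mul_of_nonneg_left hdist (norm_nonneg f)
      have h5 : ‖f‖ * (ρ ^ n * D) < ε := by
        have hρn : 0 ≤ ρ ^ n := pow_nonneg hρ0 n
        have h6 : ‖f‖ * (ρ ^ n * D) ≤ Q * ρ ^ n := by
          rw [hQ]
          nlinarith [norm_nonneg f, hD0]
        have h7 : Q * ρ ^ n < Q * (ε / Q) := by
          exact mul_lt_mul_of_pos_left hn hQ0
        rw [mul_div_cancel₀ ε (ne_of_gt hQ0)] at h7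
        linarith
      rw [h1]
      calc ‖f (x - k)‖ ≤ ‖f‖ * ‖x - k‖ := h2
        _ ≤ ‖f‖ * (ρ ^ n * D) := h4
        _ < ε := h5
    -- conclude
    intro W hW
    obtain ⟨v, hv0, rfl⟩ : ∃ v : (EuclideanSpace ℝ (Fin d)), v ≠ 0 ∧ W = Submodule.span ℝ {v} := by
      obtain ⟨v, hvne, hv⟩ := finrank_eq_one_iff'.mp hW
      refine ⟨(v : (EuclideanSpace ℝ (Fin d))), ?_, le_antisymm ?_ ?_⟩
      · intro h
        exact hvne (Subtype.ext h)
      · intro w hw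
        obtain ⟨c, hc⟩ := hv ⟨w, hw⟩
        refine Submodule.mem_span_singleton.mpr ⟨c, ?_⟩
        have := congrArg (Subtype.val) hc
        simpa using this
      · rw [Submodule.span_le, Set.singleton_subset_iff]
        exact v.2
    refine Subset.antisymm (Set.image_mono hKC) ?_
    rintro _ ⟨x, hx, rfl⟩
    have hf : (innerSL ℝ v : (EuclideanSpace ℝ (Fin d)) →L[ℝ] ℝ) ≠ 0 := by
      intro h0
      apply hv0
      have h := congrArg (fun g : (EuclideanSpace ℝ (Fin d)) →L[ℝ] ℝ => g v) h0
      simp only [innerSL_apply_apply, ContinuousLinearMap.zero_apply] at h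
      exact inner_self_eq_zero.mp h
    have hx' : (innerSL ℝ v) x ∈ (innerSL ℝ v) '' K := by
      rw [hKfC _ hf]
      exact mem_image_of_mem _ hx
    obtain ⟨k, hk, hkx⟩ := hx'
    refine ⟨k, hk, ?_⟩
    have hik : ⟪v, k⟫ = ⟪v, x⟫ := by
      simpa using hkx
    rw [orthProj, orthProj, ← Submodule.starProjection_apply, ← Submodule.starProjection_apply, Submodule.starProjection_singleton, Submodule.starProjection_singleton, hik]
end

section
/- Let $A_0, \ldots, A_d$ be affinely independent points in $\mathbb{R}^d$, let $0 < r < 1$ and $t \in \mathbb{R}^d$ be such that, setting $A_i' = r A_i + t$ for each $i$, the simplex $\operatorname{conv}\{A_0', \ldots, A_d'\}$ lies in the interior of $\operatorname{conv}\{A_0, \ldots, A_d\}$. For each $i \in \{0, 1, \ldots, d\}$ let $L_i = [A_i, A_{i+1}']$ denote the closed segment from $A_i$ to $A_{i+1}'$, with indices taken modulo $d+1$. Then for every nonempty proper subset $I \subsetneq \{0, 1, \ldots, d\}$, $\operatorname{conv}\big(\bigcup_{i \in I} L_i\big) \cap \operatorname{conv}\big(\bigcup_{i \in I^c} L_i\big)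 \ne \varnothing$. -/
open Set

open Fin.NatCast Fin.CommRing in
/-- In the cyclic group `Fin (n+1)`, any nonempty proper finset has an element `k`
with `k + 1` outside. -/
lemma exists_boundary_cyc {n : ℕ} (I : Finset (Fin (n + 1))) (hne : I.Nonempty)
    (hproper : I ≠ Finset.univ) : ∃ k, k ∈ I ∧ k + 1 ∉ I := by
  by_contra h
  push_neg at h
  obtain ⟨i, hi⟩ := hne
  have step : ∀ m : ℕ, i + (m : Fin (n + 1)) ∈ I := by
    intro m
    induction m with
    | zero => simpa using hi
    | succ m ih =>
        have : ((m + 1 : ℕ) : Fin (n + 1)) = (m : Fin (n + 1)) + 1 := by push_cast; ring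
        rw [this, ← add_assoc]
        exact h _ ih
  apply hproper
  ext j
  simp only [Finset.mem_univ, iff_true]
  have hj : i + (((j - i).val : ℕ) : Fin (n + 1)) = j := by
    rw [Fin.cast_val_eq_self]
    ring
  rw [← hj]
  exact step _

/-- Proposition on simplices: with `A₀, …, A_d` affinely independent, `Aᵢ' = r Aᵢ + t`
a scaled copy lying in the interior of the simplex, and `Lᵢ = [Aᵢ, A'_{i+1}]` (indices
mod `d+1`), the convex hulls of `⋃_{i ∈ I} Lᵢ` and `⋃_{i ∈ Iᶜ} Lᵢ` intersect for every
nonempty proper `I ⊆ {0, …, d}`. -/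
theorem simplex_segments_convexHulls_meet
    (d : ℕ) (hd : 1 ≤ d) (A : Fin (d + 1) → EuclideanSpace ℝ (Fin d))
    (hA : AffineIndependent ℝ A)
    (r : ℝ) (hr0 : 0 < r) (hr1 : r < 1) (t : EuclideanSpace ℝ (Fin d))
    (A' : Fin (d + 1) → EuclideanSpace ℝ (Fin d)) (hA' : ∀ i, A' i = r • A i + t)
    (hinside : convexHull ℝ (Set.range A') ⊆ interior (convexHull ℝ (Set.range A)))
    (L : Fin (d + 1) → Set (EuclideanSpace ℝ (Fin d)))
    (hL : ∀ i, L i = segment ℝ (A i) (A' (i + 1))) :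
    ∀ I : Finset (Fin (d + 1)), I.Nonempty → I ≠ Finset.univ →
      ((convexHull ℝ (⋃ i ∈ I, L i)) ∩ (convexHull ℝ (⋃ i ∈ Iᶜ, L i))).Nonempty := by
  intro I hne hproper
  -- k exits I: k ∈ I, k+1 ∉ I
  obtain ⟨k, hkI, hk1I⟩ := exists_boundary_cyc I hne hproper
  -- m exits Iᶜ: m ∉ I, m+1 ∈ I
  have hcne : Iᶜ.Nonempty := by
    rw [← Finset.card_pos, Finset.card_compl, tsub_pos_iff_lt]
    exact lt_of_le_of_ne (Finset.card_le_univ I) (fun h => hproper (Finset.eq_univ_of_card I (by simpa using h)))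
  have hcproper : Iᶜ ≠ Finset.univ := by
    intro h
    obtain ⟨i, hi⟩ := hne
    have : i ∈ Iᶜ := h ▸ Finset.mem_univ i
    exact (Finset.mem_compl.mp this) hi
  obtain ⟨m, hmI, hm1I⟩ := exists_boundary_cyc Iᶜ hcne hcproper
  rw [Finset.mem_compl] at hmI
  have hm1 : m + 1 ∈ I := by by_contra h; exact hm1I (Finset.mem_compl.mpr h)
  set k₀ := m + 1 with hk₀
  set k₁ := k + 1 with hk₁
  have h1r : (0:ℝ) < 1 + r := by linarith
  set a : ℝ := r / (1 + r) with ha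
  set b : ℝ := 1 / (1 + r) with hb
  have ha0 : 0 ≤ a := div_nonneg hr0.le h1r.le
  have hb0 : 0 ≤ b := div_nonneg zero_le_one h1r.le
  have hab : a + b = 1 := by rw [ha, hb, ← add_div, add_comm r 1, div_self h1r.ne']
  refine ⟨a • A k₀ + b • A' k₁, ?_, ?_⟩
  · -- I-side: A k₀ ∈ L k₀ (k₀ ∈ I), A' k₁ ∈ L k (k ∈ I)
    have h1 : A k₀ ∈ convexHull ℝ (⋃ i ∈ I, L i) := by
      apply subset_convexHull
      refine Set.mem_biUnion hm1 ?_
      rw [hL]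
      exact left_mem_segment ℝ _ _
    have h2 : A' k₁ ∈ convexHull ℝ (⋃ i ∈ I, L i) := by
      apply subset_convexHull
      refine Set.mem_biUnion hkI ?_
      rw [hL]
      exact right_mem_segment ℝ _ _
    exact (convex_convexHull ℝ _) h1 h2 ha0 hb0 hab
  · -- Iᶜ-side: A k₁ ∈ L k₁ (k₁ ∈ Iᶜ), A' k₀ ∈ L m (m ∈ Iᶜ)
    have heq : a • A k₀ + b • A' k₁ = a • A k₁ + b • A' k₀ := by
      rw [hA' k₁, hA' k₀]
      have hbr : b * r = a := by rw [ha, hb]; field_simp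
      rw [smul_add, smul_add, smul_smul, smul_smul, hbr]
      abel
    rw [heq]
    have h1 : A k₁ ∈ convexHull ℝ (⋃ i ∈ Iᶜ, L i) := by
      apply subset_convexHull
      refine Set.mem_biUnion (Finset.mem_compl.mpr hk1I) ?_
      rw [hL]
      exact left_mem_segment ℝ _ _
    have h2 : A' k₀ ∈ convexHull ℝ (⋃ i ∈ Iᶜ, L i) := by
      apply subset_convexHull
      refine Set.mem_biUnion (Finset.mem_compl.mpr hmI) ?_
      rw [hL]
      exact right_mem_segment ℝ _ _
    exact (convex_convexHull ℝ _) h1 h2 ha0 hb0 hab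
end

section
/- Let $d \ge 2$ and let $B$ be the closed unit ball in $\mathbb{R}^d$. Then there is no totally disconnected Borel set $K \subseteq \mathbb{R}^d$ such that $\operatorname{conv}(K) = B$ and $\pi_W(K) = \pi_W(B)$ for every one-dimensional linear subspace $W$ of $\mathbb{R}^d$. -/
open Set Module Metric

/-- The closed unit ball in `ℝ^d` (`d ≥ 2`) is not 1-dimensional fractal-decomposable
with a totally disconnected Borel set. -/
theorem ball_not_fractalDecomposable (d : ℕ) (hd : 2 ≤ d) :
    ¬ ∃ K : Set (EuclideanSpace ℝ (Fin d)),
      MeasurableSet K ∧ IsTotallyDisconnected K ∧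
      convexHull ℝ K = closedBall (0 : EuclideanSpace ℝ (Fin d)) 1 ∧
      (∀ (W : Submodule ℝ (EuclideanSpace ℝ (Fin d))), finrank ℝ W = 1 →
        orthProj W '' K = orthProj W '' (closedBall (0 : EuclideanSpace ℝ (Fin d)) 1)) := by
  rintro ⟨K, -, htd, hconv, -⟩
  -- Every point of the unit sphere is an extreme point of the closed ball,
  -- hence belongs to `K`.
  have hsub : sphere (0 : EuclideanSpace ℝ (Fin d)) 1 ⊆ K := by
    intro x hx
    apply extremePoints_convexHull_subset (𝕜 := ℝ) (A := K)
    rw [hconv]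
    refine ⟨sphere_subset_closedBall hx, ?_⟩
    intro x₁ hx₁ x₂ hx₂ hseg
    by_cases h12 : x₁ = x₂
    · subst h12
      rw [openSegment_same] at hseg
      exact hseg.symm
    · exfalso
      have := openSegment_subset_ball_of_ne hx₁ hx₂ h12 hseg
      rw [mem_ball, mem_sphere] at *
      rw [hx] at this
      exact lt_irrefl _ this
  -- The sphere is connected since `d ≥ 2`.
  have hrank : 1 < Module.rank ℝ (EuclideanSpace ℝ (Fin d)) := by
    have : finrank ℝ (EuclideanSpace ℝ (Fin d)) = d := finrank_euclideanSpace_fin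
    rw [← Module.finrank_eq_rank]
    exact_mod_cast this ▸ Nat.lt_of_lt_of_le one_lt_two hd
  have hconn : IsConnected (sphere (0 : EuclideanSpace ℝ (Fin d)) 1) :=
    isConnected_sphere hrank 0 zero_le_one
  have hsub' := htd _ hsub hconn.isPreconnected
  -- But the sphere has two distinct points.
  set e : EuclideanSpace ℝ (Fin d) := EuclideanSpace.single ⟨0, by omega⟩ (1 : ℝ)
  have he : ‖e‖ = 1 := by simp [e, EuclideanSpace.norm_single]
  have h1 : e ∈ sphere (0 : EuclideanSpace ℝ (Fin d)) 1 := by simp [he]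
  have h2 : -e ∈ sphere (0 : EuclideanSpace ℝ (Fin d)) 1 := by simp [he]
  have := hsub' h1 h2
  have hne : e ≠ 0 := by
    intro h
    rw [h, norm_zero] at he
    norm_num at he
  apply hne
  have : e + e = 0 := by
    nth_rewrite 2 [this]
    simp
  have h2e : (2 : ℝ) • e = 0 := by rw [two_smul]; exact this
  simpa using smul_eq_zero.mp h2e
end
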